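/- Let μ be a deficient topological measure on a locally compact Hausdorff space X, f a bounded continuous real-valued function on X with f(X) ⊆ [a,b], and V an open set with μ(V) < ∞. Then the net (∫_K f dμ), indexed by the compact subsets K of V directed by inclusion, converges to ∫_V f dμ; that is, lim over compact K ⊆ V of [ aμ(K) + ∫_a^b μ(K ∩ f⁻¹([t,∞))) dt ] equals aμ(V) + ∫_a^b μ(V ∩ f⁻¹((t,∞))) dt. -/

import Mathlib

open MeasureTheory Set Filter Topology ENNReal

/-- A deficient topological measure on a topological space `X`: a set function with values in
`[0,∞]` (recorded on all sets, but constrained only on open and closed sets) that is finitely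
additive on disjoint compact sets, inner regular on open sets with respect to compact sets,
and outer regular on closed sets with respect to open sets. -/
structure DeficientTopologicalMeasure (X : Type*) [TopologicalSpace X] where
  m : Set X → ℝ≥0∞
  additive : ∀ ⦃C K : Set X⦄, IsCompact C → IsCompact K → Disjoint C K →
    m (C ∪ K) = m C + m K
  innerRegular : ∀ ⦃U : Set X⦄, IsOpen U →
    m U = ⨆ (K : Set X) (_ : IsCompact K) (_ : K ⊆ U), m K
  outerRegular : ∀ ⦃F : Set X⦄, IsClosed F →
    m F = ⨅ (U : Set X) (_ : IsOpen U) (_ : F ⊆ U), m U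

namespace DTMaux

section meas

variable {X : Type*} [TopologicalSpace X] [T2Space X] (μ : DeficientTopologicalMeasure X)

omit [T2Space X] in
lemma mono_co {K U : Set X} (hK : IsCompact K) (hU : IsOpen U) (h : K ⊆ U) :
    μ.m K ≤ μ.m U := by
  rw [μ.innerRegular hU]
  exact le_iSup_of_le K (le_iSup_of_le hK (le_iSup_of_le h le_rfl))

lemma mono_cc {C K : Set X} (hC : IsCompact C) (hK : IsCompact K) (h : C ⊆ K) :
    μ.m C ≤ μ.m K := by
  rw [μ.outerRegular hK.isClosed]
  exact le_iInf fun U => le_iInf fun hU => le_iInf fun hKU => mono_co μ hC hU (h.trans hKU)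

omit [T2Space X] in
lemma mono_oo {U W : Set X} (hU : IsOpen U) (hW : IsOpen W) (h : U ⊆ W) :
    μ.m U ≤ μ.m W := by
  rw [μ.innerRegular hU]
  exact iSup_le fun K => iSup_le fun hK => iSup_le fun hKU => mono_co μ hK hW (hKU.trans h)

omit [T2Space X] in
lemma exists_compact {U : Set X} (hU : IsOpen U) (hfin : μ.m U ≠ ∞) {η : ℝ≥0∞} (hη : η ≠ 0) :
    ∃ C : Set X, IsCompact C ∧ C ⊆ U ∧ μ.m U ≤ μ.m C + η := by
  rcases eq_or_ne (μ.m U) 0 with h0 | h0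
  · exact ⟨∅, isCompact_empty, empty_subset _, by simp [h0]⟩
  · have hlt : μ.m U - η < μ.m U := ENNReal.sub_lt_self hfin h0 hη
    rw [μ.innerRegular hU] at hlt
    obtain ⟨K, hK⟩ := lt_iSup_iff.mp hlt
    obtain ⟨hKc, hK⟩ := lt_iSup_iff.mp hK
    obtain ⟨hKU, hK⟩ := lt_iSup_iff.mp hK
    refine ⟨K, hKc, hKU, ?_⟩
    rw [μ.innerRegular hU]
    exact tsub_le_iff_right.mp hK.le

end meas

section real

open intervalIntegral Finset

lemma integral_le_shift {g G : ℝ → ℝ} {M a b : ℝ} (hab : a ≤ b)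
    (hg : Antitone g) (hG : Antitone G) (hG0 : ∀ t, 0 ≤ G t) (hGM : ∀ t, G t ≤ M)
    (h : ∀ ⦃s t : ℝ⦄, s < t → g t ≤ G s) :
    ∫ t in a..b, g t ≤ ∫ t in a..b, G t := by
  have hM0 : 0 ≤ M := (hG0 0).trans (hGM 0)
  have iG : ∀ u v : ℝ, IntervalIntegrable G volume u v := fun u v =>
    (hG.antitoneOn _).intervalIntegrable
  have key : ∀ h' : ℝ, 0 < h' → ∫ t in a..b, g t ≤ (∫ t in a..b, G t) + h' * M := by
    intro h' hh'
    have hshift : Antitone fun t => G (t - h') := fun s t hst => hG (by linarith)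
    have step1 : ∫ t in a..b, g t ≤ ∫ t in a..b, G (t - h') :=
      integral_mono_on hab ((hg.antitoneOn _).intervalIntegrable)
        ((hshift.antitoneOn _).intervalIntegrable) (fun t _ => h (by linarith))
    have step2 : (∫ t in a..b, G (t - h')) = ∫ t in (a - h')..(b - h'), G t :=
      integral_comp_sub_right G h'
    have split : (∫ t in (a - h')..(b - h'), G t)
        = (∫ t in (a - h')..a, G t) + ∫ t in a..(b - h'), G t :=
      (integral_add_adjacent_intervals (iG _ _) (iG _ _)).symm
    have e1 : (∫ t in (a - h')..a, G t) ≤ h' * M := by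
      have h1 := integral_mono_on (by linarith : a - h' ≤ a) (iG _ _)
        intervalIntegrable_const (g := fun _ => M) (fun t _ => hGM t)
      rw [intervalIntegral.integral_const, smul_eq_mul] at h1
      calc (∫ t in (a - h')..a, G t) ≤ (a - (a - h')) * M := h1
        _ = h' * M := by ring
    have e2 : (∫ t in a..(b - h'), G t) ≤ ∫ t in a..b, G t := by
      have hsplit : (∫ t in a..(b - h'), G t) + ∫ t in (b - h')..b, G t
          = ∫ t in a..b, G t := integral_add_adjacent_intervals (iG _ _) (iG _ _)
      have hnn : 0 ≤ ∫ t in (b - h')..b, G t :=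
        integral_nonneg (by linarith) (fun u _ => hG0 u)
      linarith
    linarith [step1, step2.le, split.le]
  refine le_of_forall_pos_le_add fun ε hε => ?_
  have h1 := key (ε / (M + 1)) (by positivity)
  have h2 : ε / (M + 1) * M ≤ ε := by
    rw [div_mul_eq_mul_div, div_le_iff₀ (by linarith)]
    nlinarith
  linarith

lemma lower_grid {g G : ℝ → ℝ} {M δ a b : ℝ} {n : ℕ} (hn : 0 < n) (hab : a ≤ b)
    (hg : Antitone g) (hG : Antitone G) (hg0 : ∀ t, 0 ≤ g t) (hG0 : ∀ t, 0 ≤ G t)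
    (hGM : ∀ t, G t ≤ M) (hδ : 0 ≤ δ)
    (hgrid : ∀ i : ℕ, i < n →
      G (a + ((i : ℝ) + 1) * ((b - a) / n)) - δ ≤ g (a + ((i : ℝ) + 1) * ((b - a) / n))) :
    ∫ t in a..b, G t ≤ (∫ t in a..b, g t) + (b - a) / n * M + (b - a) * δ := by
  set h : ℝ := (b - a) / n with hh
  have hnR : (0:ℝ) < n := Nat.cast_pos.mpr hn
  have hh0 : 0 ≤ h := div_nonneg (by linarith) hnR.le
  set T : ℕ → ℝ := fun i => a + (i : ℝ) * h with hT
  have hT0 : T 0 = a := by simp [hT]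
  have hTn : T n = b := by
    simp only [hT, hh]
    field_simp
    ring
  have hTsucc : ∀ i : ℕ, T (i + 1) - T i = h := by
    intro i; simp only [hT]; push_cast; ring
  have hTle : ∀ i : ℕ, T i ≤ T (i + 1) := fun i => by
    have := hTsucc i; linarith
  have iG : ∀ u v : ℝ, IntervalIntegrable G volume u v := fun u v =>
    (hG.antitoneOn _).intervalIntegrable
  have ig : ∀ u v : ℝ, IntervalIntegrable g volume u v := fun u v =>
    (hg.antitoneOn _).intervalIntegrable
  have hGsum : ∑ i ∈ range n, ∫ t in (T i)..(T (i+1)), G t = ∫ t in a..b, G t := by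
    have := sum_integral_adjacent_intervals (a := T) (μ := volume) (f := G)
      (fun i _ => iG _ _) (n := n)
    rwa [hT0, hTn] at this
  have hgsum : ∑ i ∈ range n, ∫ t in (T i)..(T (i+1)), g t = ∫ t in a..b, g t := by
    have := sum_integral_adjacent_intervals (a := T) (μ := volume) (f := g)
      (fun i _ => ig _ _) (n := n)
    rwa [hT0, hTn] at this
  have hGpiece : ∀ i : ℕ, (∫ t in (T i)..(T (i+1)), G t) ≤ h * G (T i) := by
    intro i
    have h1 := integral_mono_on (hTle i) (iG _ _) intervalIntegrable_const
      (g := fun _ => G (T i)) (fun t ht => hG ht.1)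
    rw [intervalIntegral.integral_const, smul_eq_mul, hTsucc i] at h1
    exact h1
  have hgpiece : ∀ i : ℕ, h * g (T (i+1)) ≤ ∫ t in (T i)..(T (i+1)), g t := by
    intro i
    have h1 := integral_mono_on (hTle i) intervalIntegrable_const (ig _ _)
      (f := fun _ => g (T (i+1))) (fun t ht => hg ht.2)
    rw [intervalIntegral.integral_const, smul_eq_mul, hTsucc i] at h1
    exact h1
  have htel : ∑ i ∈ range n, (h * G (T i) - h * G (T (i+1)))
      = h * G (T 0) - h * G (T n) := sum_range_sub' (fun i => h * G (T i)) n
  have htelle : ∑ i ∈ range n, h * G (T i)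
      ≤ (∑ i ∈ range n, h * G (T (i+1))) + h * M := by
    have h2 : h * G (T 0) - h * G (T n) ≤ h * M := by
      have := hGM (T 0); have := hG0 (T n); nlinarith
    have h3 : ∑ i ∈ range n, h * G (T i)
        = (∑ i ∈ range n, h * G (T (i+1))) + (h * G (T 0) - h * G (T n)) := by
      rw [← htel, ← Finset.sum_add_distrib]
      congr 1; funext i; ring_nf
    linarith [h3, h2]
  have hcomp : ∑ i ∈ range n, h * G (T (i+1))
      ≤ (∑ i ∈ range n, ∫ t in (T i)..(T (i+1)), g t) + n * (h * δ) := by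
    have hstep : ∀ i ∈ range n,
        h * G (T (i+1)) ≤ (∫ t in (T i)..(T (i+1)), g t) + h * δ := by
      intro i hi
      have hgr := hgrid i (mem_range.mp hi)
      have hTi : T (i + 1) = a + ((i : ℝ) + 1) * h := by
        simp only [hT]; push_cast; ring
      have h4 : h * G (T (i+1)) ≤ h * (g (T (i+1)) + δ) := by
        apply mul_le_mul_of_nonneg_left _ hh0
        rw [hTi]; linarith [hgr]
      calc h * G (T (i+1)) ≤ h * (g (T (i+1)) + δ) := h4
        _ = h * g (T (i+1)) + h * δ := by ring
        _ ≤ (∫ t in (T i)..(T (i+1)), g t) + h * δ := by linarith [hgpiece i]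
    calc ∑ i ∈ range n, h * G (T (i+1))
        ≤ ∑ i ∈ range n, ((∫ t in (T i)..(T (i+1)), g t) + h * δ) := sum_le_sum hstep
      _ = (∑ i ∈ range n, ∫ t in (T i)..(T (i+1)), g t) + n * (h * δ) := by
          rw [Finset.sum_add_distrib, Finset.sum_const, card_range, nsmul_eq_mul]
  have hfinal : (n : ℝ) * (h * δ) = (b - a) * δ := by
    rw [← mul_assoc]
    congr 1
    rw [hh]; field_simp
  calc ∫ t in a..b, G t = ∑ i ∈ range n, ∫ t in (T i)..(T (i+1)), G t := hGsum.symm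
    _ ≤ ∑ i ∈ range n, h * G (T i) := sum_le_sum (fun i _ => hGpiece i)
    _ ≤ (∑ i ∈ range n, h * G (T (i+1))) + h * M := htelle
    _ ≤ ((∑ i ∈ range n, ∫ t in (T i)..(T (i+1)), g t) + n * (h * δ)) + h * M := by
        linarith [hcomp]
    _ = (∫ t in a..b, g t) + (b - a) / n * M + (b - a) * δ := by
        rw [hgsum, hfinal]; ring

end real

end DTMaux


/-- Let `μ` be a deficient topological measure on a locally compact Hausdorff
space, `f` bounded continuous with `f(X) ⊆ [a,b]`, and `V` open with `μ(V) < ∞`. Then the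
net of quasi-integrals `∫_K f dμ = aμ(K) + ∫_a^b μ(K ∩ f⁻¹([t,∞))) dt`, indexed by the
compact subsets `K ⊆ V` directed by inclusion, converges to
`∫_V f dμ = aμ(V) + ∫_a^b μ(V ∩ f⁻¹((t,∞))) dt`. -/
theorem stmt2 {X : Type*} [TopologicalSpace X] [LocallyCompactSpace X] [T2Space X]
    (μ : DeficientTopologicalMeasure X) (f : X → ℝ) (hf : Continuous f)
    (a b : ℝ) (hfab : ∀ x, f x ∈ Icc a b)
    (V : Set X) (hV : IsOpen V) (hVfin : μ.m V < ∞) :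
    Tendsto (fun K : {K : Set X // IsCompact K ∧ K ⊆ V} =>
        a * (μ.m K.1).toReal + ∫ t in a..b, (μ.m (K.1 ∩ f ⁻¹' (Ici t))).toReal)
      atTop
      (nhds (a * (μ.m V).toReal + ∫ t in a..b, (μ.m (V ∩ f ⁻¹' (Ioi t))).toReal)) := by
  classical
  haveI : Nonempty {K : Set X // IsCompact K ∧ K ⊆ V} :=
    ⟨⟨∅, isCompact_empty, empty_subset _⟩⟩
  haveI : IsDirected {K : Set X // IsCompact K ∧ K ⊆ V} (· ≤ ·) :=
    ⟨fun K L => ⟨⟨K.1 ∪ L.1, K.2.1.union L.2.1, union_subset K.2.2 L.2.2⟩,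
      show K.1 ⊆ K.1 ∪ L.1 from subset_union_left,
      show L.1 ⊆ K.1 ∪ L.1 from subset_union_right⟩⟩
  rcases isEmpty_or_nonempty X with hX | hX
  · have he : ∀ s t : Set X, s = t := fun s t => by
      rw [Set.eq_empty_of_isEmpty s, Set.eq_empty_of_isEmpty t]
    have hconst : (fun K : {K : Set X // IsCompact K ∧ K ⊆ V} =>
        a * (μ.m K.1).toReal + ∫ t in a..b, (μ.m (K.1 ∩ f ⁻¹' (Ici t))).toReal)
        = fun _ => a * (μ.m V).toReal + ∫ t in a..b, (μ.m (V ∩ f ⁻¹' (Ioi t))).toReal := by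
      funext K
      rw [he K.1 V]
      congr 1
      apply intervalIntegral.integral_congr
      intro t _
      exact congrArg (fun s => (μ.m s).toReal) (he (V ∩ f ⁻¹' (Ici t)) (V ∩ f ⁻¹' (Ioi t)))
    rw [hconst]
    exact tendsto_const_nhds
  obtain ⟨x0⟩ := hX
  have hab : a ≤ b := (hfab x0).1.trans (hfab x0).2
  have hVne : μ.m V ≠ ∞ := hVfin.ne
  set mV : ℝ := (μ.m V).toReal with hmV
  have hmV0 : 0 ≤ mV := ENNReal.toReal_nonneg
  have hIci : ∀ t : ℝ, IsClosed (f ⁻¹' Ici t) := fun t => isClosed_Ici.preimage hf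
  have hIoi : ∀ t : ℝ, IsOpen (f ⁻¹' Ioi t) := fun t => isOpen_Ioi.preimage hf
  set G : ℝ → ℝ := fun t => (μ.m (V ∩ f ⁻¹' Ioi t)).toReal with hGdef
  -- G properties
  have hG_anti : Antitone G := by
    intro s t hst
    exact ENNReal.toReal_mono
      ((DTMaux.mono_oo μ (hV.inter (hIoi s)) hV inter_subset_left).trans_lt hVfin).ne
      (DTMaux.mono_oo μ (hV.inter (hIoi t)) (hV.inter (hIoi s))
        (inter_subset_inter_right V (preimage_mono (Ioi_subset_Ioi hst))))
  have hG0 : ∀ t, 0 ≤ G t := fun t => ENNReal.toReal_nonneg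
  have hGM : ∀ t, G t ≤ mV := fun t =>
    ENNReal.toReal_mono hVne (DTMaux.mono_oo μ (hV.inter (hIoi t)) hV inter_subset_left)
  -- per-compact properties
  have hg_anti : ∀ (K : Set X), IsCompact K → K ⊆ V →
      Antitone (fun t => (μ.m (K ∩ f ⁻¹' Ici t)).toReal) := by
    intro K hKc hKV s t hst
    exact ENNReal.toReal_mono
      ((DTMaux.mono_co μ (hKc.inter_right (hIci s)) hV
        (inter_subset_left.trans hKV)).trans_lt hVfin).ne
      (DTMaux.mono_cc μ (hKc.inter_right (hIci t)) (hKc.inter_right (hIci s))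
        (inter_subset_inter_right K (preimage_mono (Ici_subset_Ici.mpr hst))))
  have hcross : ∀ (K : Set X), IsCompact K → K ⊆ V → ∀ ⦃s t : ℝ⦄, s < t →
      (μ.m (K ∩ f ⁻¹' Ici t)).toReal ≤ G s := by
    intro K hKc hKV s t hst
    exact ENNReal.toReal_mono
      ((DTMaux.mono_oo μ (hV.inter (hIoi s)) hV inter_subset_left).trans_lt hVfin).ne
      (DTMaux.mono_co μ (hKc.inter_right (hIci t)) (hV.inter (hIoi s))
        (inter_subset_inter hKV (preimage_mono (Ici_subset_Ioi.mpr hst))))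
  have hupper : ∀ (K : Set X), IsCompact K → K ⊆ V →
      (∫ t in a..b, (μ.m (K ∩ f ⁻¹' Ici t)).toReal) ≤ ∫ t in a..b, G t := by
    intro K hKc hKV
    exact DTMaux.integral_le_shift hab (hg_anti K hKc hKV) hG_anti hG0 hGM
      (hcross K hKc hKV)
  rw [Metric.tendsto_nhds]
  intro ε hε
  rw [eventually_atTop]
  -- parameters
  set ε₁ : ℝ := ε / (4 * (|a| + 1)) with hε₁def
  have hε₁ : 0 < ε₁ := by positivity
  set δ : ℝ := ε / (4 * ((b - a) + 1)) with hδdef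
  have hδ : 0 < δ := by
    have : (0:ℝ) < (b - a) + 1 := by linarith
    positivity
  set n : ℕ := ⌈4 * (b - a) * mV / ε⌉₊ + 1 with hndef
  have hn : 0 < n := Nat.succ_pos _
  have hnR : (0:ℝ) < n := Nat.cast_pos.mpr hn
  -- the big compact
  obtain ⟨Cs, hCsc, hCsV, hCs⟩ := DTMaux.exists_compact μ hV hVne
    (η := ENNReal.ofReal ε₁) (by simp [ENNReal.ofReal_eq_zero]; linarith)
  have hexC : ∀ i : ℕ, ∃ C : Set X, IsCompact C ∧
      C ⊆ V ∩ f ⁻¹' (Ioi (a + ((i : ℝ) + 1) * ((b - a) / n))) ∧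
      μ.m (V ∩ f ⁻¹' (Ioi (a + ((i : ℝ) + 1) * ((b - a) / n)))) ≤ μ.m C + ENNReal.ofReal δ := by
    intro i
    exact DTMaux.exists_compact μ (hV.inter (hIoi _))
      ((DTMaux.mono_oo μ (hV.inter (hIoi _)) hV inter_subset_left).trans_lt hVfin).ne
      (by simp [ENNReal.ofReal_eq_zero]; linarith)
  choose C hCc hCsub hCle using hexC
  set K₀ : Set X := Cs ∪ ⋃ i ∈ Finset.range n, C i with hK₀def
  have hK₀c : IsCompact K₀ := by
    apply hCsc.union
    apply (Finset.range n).finite_toSet.isCompact_biUnion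
    intro i _
    exact hCc i
  have hK₀V : K₀ ⊆ V := by
    apply union_subset hCsV
    exact iUnion₂_subset fun i _ => (hCsub i).trans inter_subset_left
  refine ⟨⟨K₀, hK₀c, hK₀V⟩, ?_⟩
  rintro ⟨K, hKc, hKV⟩ hK
  have hK₀K : K₀ ⊆ K := hK
  set gK : ℝ → ℝ := fun t => (μ.m (K ∩ f ⁻¹' Ici t)).toReal with hgKdef
  -- bound on μ K
  have hμKfin : μ.m K ≠ ∞ := ((DTMaux.mono_co μ hKc hV hKV).trans_lt hVfin).ne
  have hμK_le : (μ.m K).toReal ≤ mV :=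
    ENNReal.toReal_mono hVne (DTMaux.mono_co μ hKc hV hKV)
  have hμK_ge : mV ≤ (μ.m K).toReal + ε₁ := by
    have h1 : μ.m V ≤ μ.m K + ENNReal.ofReal ε₁ :=
      hCs.trans (add_le_add_left (DTMaux.mono_cc μ hCsc hKc
        ((subset_union_left).trans hK₀K)) _)
    have h2 := ENNReal.toReal_mono
      (by simp [hμKfin, ENNReal.ofReal_ne_top]) h1
    rwa [ENNReal.toReal_add hμKfin ENNReal.ofReal_ne_top,
      ENNReal.toReal_ofReal hε₁.le] at h2
  -- integral bounds
  have hup : (∫ t in a..b, gK t) ≤ ∫ t in a..b, G t := hupper K hKc hKV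
  have hgrid : ∀ i : ℕ, i < n →
      G (a + ((i : ℝ) + 1) * ((b - a) / n)) - δ ≤ gK (a + ((i : ℝ) + 1) * ((b - a) / n)) := by
    intro i hi
    set t : ℝ := a + ((i : ℝ) + 1) * ((b - a) / n) with htdef
    have hCi : C i ⊆ K ∩ f ⁻¹' Ici t := by
      refine subset_inter ?_ ?_
      · exact ((subset_biUnion_of_mem (u := C) (Finset.mem_coe.mpr (Finset.mem_range.mpr hi))).trans
          ((subset_union_right).trans hK₀K))
      · exact (hCsub i).trans (inter_subset_right.trans (preimage_mono Ioi_subset_Ici_self))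
    have h1 : μ.m (V ∩ f ⁻¹' Ioi t) ≤ μ.m (K ∩ f ⁻¹' Ici t) + ENNReal.ofReal δ :=
      (hCle i).trans (add_le_add_left (DTMaux.mono_cc μ (hCc i)
        (hKc.inter_right (hIci t)) hCi) _)
    have hfin2 : μ.m (K ∩ f ⁻¹' Ici t) ≠ ∞ :=
      ((DTMaux.mono_co μ (hKc.inter_right (hIci t)) hV
        (inter_subset_left.trans hKV)).trans_lt hVfin).ne
    have h2 := ENNReal.toReal_mono
      (by simp [hfin2, ENNReal.ofReal_ne_top]) h1
    rw [ENNReal.toReal_add hfin2 ENNReal.ofReal_ne_top,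
      ENNReal.toReal_ofReal hδ.le] at h2
    simpa [hgKdef, hGdef] using sub_le_iff_le_add.mpr h2
  have hlow : (∫ t in a..b, G t)
      ≤ (∫ t in a..b, gK t) + (b - a) / n * mV + (b - a) * δ :=
    DTMaux.lower_grid hn hab (hg_anti K hKc hKV) hG_anti
      (fun t => ENNReal.toReal_nonneg) hG0 hGM hδ.le hgrid
  -- numeric bounds
  have hb1 : (b - a) / n * mV ≤ ε / 4 := by
    have hceil : 4 * (b - a) * mV / ε ≤ (n : ℝ) := by
      refine (Nat.le_ceil _).trans ?_
      rw [hndef]; push_cast; linarith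
    rw [div_mul_eq_mul_div, div_le_iff₀ hnR]
    have h5 : 4 * (b - a) * mV ≤ ε * (n:ℝ) := by
      rw [div_le_iff₀ hε] at hceil
      linarith
    linarith
  have hb2 : (b - a) * δ ≤ ε / 4 := by
    rw [hδdef, mul_div_assoc', div_le_div_iff₀ (by linarith) (by norm_num)]
    nlinarith
  have hb3 : |a| * ε₁ ≤ ε / 4 := by
    rw [hε₁def, mul_div_assoc', div_le_div_iff₀ (by positivity) (by norm_num)]
    nlinarith [abs_nonneg a]
  -- conclude
  rw [Real.dist_eq]
  have he : a * (μ.m K).toReal + (∫ t in a..b, gK t)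
      - (a * mV + ∫ t in a..b, G t)
      = a * ((μ.m K).toReal - mV) + ((∫ t in a..b, gK t) - ∫ t in a..b, G t) := by ring
  calc |a * (μ.m K).toReal + (∫ t in a..b, gK t) - (a * mV + ∫ t in a..b, G t)|
      = |a * ((μ.m K).toReal - mV) + ((∫ t in a..b, gK t) - ∫ t in a..b, G t)| := by rw [he]
    _ ≤ |a * ((μ.m K).toReal - mV)| + |(∫ t in a..b, gK t) - ∫ t in a..b, G t| :=
        abs_add_le _ _
    _ ≤ |a| * ε₁ + (ε / 4 + ε / 4) := by
        gcongr ?_ + ?_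
        · rw [abs_mul]
          exact mul_le_mul_of_nonneg_left
            (abs_le.mpr ⟨by linarith, by linarith⟩) (abs_nonneg a)
        · exact abs_le.mpr ⟨by linarith, by linarith⟩
    _ < ε := by linarith
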